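/- For p ≥ 3, the function f(y) = |1+y|^{p−1} + sgn(y−1)|y−1|^{p−1} is convex on (0, ∞), and consequently g(y) = f(y)/y is nondecreasing on (0, ∞). -/

import Mathlib

open Set Real Filter Topology

/-- A function dominated by `|t|^q` with `q > 1` has derivative `0` at `0`. -/
lemma aux_deriv_zero {q : ℝ} (hq : 1 < q) (g : ℝ → ℝ) (hg0 : g 0 = 0)
    (h : ∀ t, |g t| ≤ |t| ^ q) : HasDerivAt g 0 0 := by
  rw [hasDerivAt_iff_tendsto_slope]
  have hbound : ∀ᶠ t in 𝓝[≠] (0:ℝ), ‖slope g 0 t‖ ≤ |t| ^ (q - 1) := by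
    refine Filter.eventually_of_mem self_mem_nhdsWithin (fun t ht => ?_)
    have ht0 : t ≠ 0 := ht
    have habs : (0:ℝ) < |t| := abs_pos.mpr ht0
    rw [slope_def_field, hg0, sub_zero, sub_zero, Real.norm_eq_abs, abs_div]
    rw [Real.rpow_sub habs, Real.rpow_one]
    exact (div_le_div_iff_of_pos_right habs).mpr (h t)
  have htend : Tendsto (fun t : ℝ => |t| ^ (q - 1)) (𝓝[≠] (0:ℝ)) (𝓝 0) := by
    have hc : Continuous (fun t : ℝ => |t| ^ (q - 1)) :=
      continuous_abs.rpow_const (fun x => Or.inr (by linarith))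
    have := hc.tendsto 0
    simp only [abs_zero, Real.zero_rpow (by linarith : q - 1 ≠ 0)] at this
    exact this.mono_left nhdsWithin_le_nhds
  exact squeeze_zero_norm' hbound htend

/-- Increasing differences for `t ↦ t ^ r`, `r ≥ 1`, on nonnegative reals. -/
lemma aux_diff {r : ℝ} (hr : 1 ≤ r) {a b δ : ℝ} (hb : 0 ≤ b) (hba : b ≤ a) (hδ : 0 ≤ δ) :
    (b + δ) ^ r - b ^ r ≤ (a + δ) ^ r - a ^ r := by
  by_cases hT0 : a + δ - b = 0
  · have ha : a = b := by linarith
    have hd : δ = 0 := by linarith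
    simp [ha, hd]
  · have hT : 0 < a + δ - b := lt_of_le_of_ne (by linarith) (Ne.symm hT0)
    set T := a + δ - b with hTdef
    have hl : 0 ≤ (a - b) / T := div_nonneg (by linarith) hT.le
    have hm : 0 ≤ δ / T := div_nonneg hδ hT.le
    have hsum : (a - b) / T + δ / T = 1 := by
      rw [← add_div, show a - b + δ = T by rw [hTdef]; ring]
      exact div_self hT0
    have cvx := convexOn_rpow hr
    have mem1 : a + δ ∈ Ici (0:ℝ) := by simp; linarith
    have mem2 : b ∈ Ici (0:ℝ) := hb
    have h1 := cvx.2 mem1 mem2 hl hm hsum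
    have h2 := cvx.2 mem1 mem2 hm hl (by linarith)
    simp only [smul_eq_mul] at h1 h2
    have e1 : (a - b) / T * (a + δ) + δ / T * b = a := by
      field_simp; ring
    have e2 : δ / T * (a + δ) + (a - b) / T * b = b + δ := by
      field_simp; ring
    rw [e1] at h1
    rw [e2] at h2
    have key := add_le_add h1 h2
    have e3 : (a - b) / T * (a + δ) ^ r + δ / T * b ^ r +
        (δ / T * (a + δ) ^ r + (a - b) / T * b ^ r) = (a + δ) ^ r + b ^ r := by
      linear_combination ((a + δ) ^ r + b ^ r) * hsum
    linarith

/-- Monotonicity of `y ↦ (1+y)^r + |y-1|^r` on `[0, ∞)` for `r ≥ 1`. -/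
lemma aux_mono {r : ℝ} (hr : 1 ≤ r) :
    MonotoneOn (fun y : ℝ => (1 + y) ^ r + |y - 1| ^ r) (Ici 0) := by
  have key₁ : ∀ x y : ℝ, 0 ≤ x → x ≤ y → y ≤ 1 →
      (1 + x) ^ r + |x - 1| ^ r ≤ (1 + y) ^ r + |y - 1| ^ r := by
    intro x y hx hxy hy1
    rw [abs_of_nonpos (by linarith : x - 1 ≤ 0), abs_of_nonpos (by linarith : y - 1 ≤ 0),
      neg_sub, neg_sub]
    have h := aux_diff hr (b := 1 - y) (a := 1 + x) (δ := y - x)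
      (by linarith) (by linarith) (by linarith)
    rw [show (1 - y) + (y - x) = 1 - x by ring, show (1 + x) + (y - x) = 1 + y by ring] at h
    linarith
  have key₂ : ∀ x y : ℝ, 1 ≤ x → x ≤ y →
      (1 + x) ^ r + |x - 1| ^ r ≤ (1 + y) ^ r + |y - 1| ^ r := by
    intro x y hx hxy
    rw [abs_of_nonneg (by linarith : (0:ℝ) ≤ x - 1), abs_of_nonneg (by linarith : (0:ℝ) ≤ y - 1)]
    have h1 : (1 + x) ^ r ≤ (1 + y) ^ r :=
      Real.rpow_le_rpow (by linarith) (by linarith) (by linarith)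
    have h2 : (x - 1) ^ r ≤ (y - 1) ^ r :=
      Real.rpow_le_rpow (by linarith) (by linarith) (by linarith)
    linarith
  intro x hx y hy hxy
  simp only [mem_Ici] at hx hy
  by_cases hy1 : y ≤ 1
  · exact key₁ x y hx hxy hy1
  · by_cases hx1 : 1 ≤ x
    · exact key₂ x y hx1 hxy
    · push_neg at hx1 hy1
      exact (key₁ x 1 hx (by linarith) le_rfl).trans (key₂ 1 y le_rfl (by linarith))

theorem stmt_9 (p : ℝ) (hp : 3 ≤ p) (f : ℝ → ℝ)
    (hf : ∀ y : ℝ, f y = |1 + y| ^ (p - 1) + Real.sign (y - 1) * |y - 1| ^ (p - 1)) :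
    ConvexOn ℝ (Set.Ioi 0) f ∧ MonotoneOn (fun y => f y / y) (Set.Ioi 0) := by
  have hq1 : (1:ℝ) < p - 1 := by linarith
  have hq0 : p - 1 ≠ 0 := by linarith
  have hr1 : (1:ℝ) ≤ p - 2 := by linarith
  -- the auxiliary function F
  set F : ℝ → ℝ := fun y => (1 + y) ^ (p - 1) - |1 - y| ^ (p - 1)
      + 2 * (max (y - 1) 0) ^ (p - 1) with hFdef
  -- the derivative candidate
  set D : ℝ → ℝ := fun y => (p - 1) * ((1 + y) ^ (p - 2) + |y - 1| ^ (p - 2)) with hDdef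
  -- F has derivative D on Ioi 0
  have hFd : ∀ y ∈ Ioi (0:ℝ), HasDerivAt F (D y) y := by
    intro y hy
    simp only [mem_Ioi] at hy
    rcases lt_trichotomy y 1 with hlt | heq | hgt
    · -- 0 < y < 1
      have hA : HasDerivAt (fun z : ℝ => (1 + z) ^ (p - 1))
          (1 * (p - 1) * (1 + y) ^ (p - 1 - 1)) y :=
        ((hasDerivAt_id y).const_add 1).rpow_const (Or.inl (ne_of_gt (by simp only [id_eq]; linarith)))
      have hB : HasDerivAt (fun z : ℝ => (1 - z) ^ (p - 1))
          ((-1) * (p - 1) * (1 - y) ^ (p - 1 - 1)) y :=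
        ((hasDerivAt_id y).const_sub 1).rpow_const (Or.inl (ne_of_gt (by simp only [id_eq]; linarith)))
      have h : HasDerivAt (fun z : ℝ => (1 + z) ^ (p - 1) - (1 - z) ^ (p - 1))
          (1 * (p - 1) * (1 + y) ^ (p - 1 - 1) - (-1) * (p - 1) * (1 - y) ^ (p - 1 - 1)) y :=
        hA.sub hB
      have heqF : F =ᶠ[nhds y] (fun z : ℝ => (1 + z) ^ (p - 1) - (1 - z) ^ (p - 1)) := by
        refine Filter.eventually_of_mem (Iio_mem_nhds hlt) (fun z hz => ?_)
        have hz1 : z < 1 := hz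
        simp only [hFdef]
        rw [abs_of_nonneg (by linarith : (0:ℝ) ≤ 1 - z),
          max_eq_right (by linarith : z - 1 ≤ 0), Real.zero_rpow hq0]
        ring
      have := h.congr_of_eventuallyEq heqF
      convert this using 1
      show (p - 1) * ((1 + y) ^ (p - 2) + |y - 1| ^ (p - 2)) = _
      rw [abs_of_nonpos (by linarith : y - 1 ≤ 0),
        show p - 1 - 1 = p - 2 by ring, show -(y - 1) = 1 - y by ring]
      ring
      all_goals rfl
    · -- y = 1
      subst heq
      have hA : HasDerivAt (fun z : ℝ => (1 + z) ^ (p - 1))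
          (1 * (p - 1) * (1 + 1) ^ (p - 1 - 1)) 1 :=
        ((hasDerivAt_id 1).const_add 1).rpow_const (Or.inl (ne_of_gt (by norm_num)))
      have hGabs : HasDerivAt (fun t : ℝ => |t| ^ (p - 1)) 0 0 := by
        refine aux_deriv_zero hq1 _ (by simp [Real.zero_rpow hq0]) (fun t => ?_)
        rw [abs_of_nonneg (Real.rpow_nonneg (abs_nonneg t) _)]
      have hGmax : HasDerivAt (fun t : ℝ => (max t 0) ^ (p - 1)) 0 0 := by
        refine aux_deriv_zero hq1 _ (by simp [Real.zero_rpow hq0]) (fun t => ?_)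
        rw [abs_of_nonneg (Real.rpow_nonneg (le_max_right t 0) _)]
        exact Real.rpow_le_rpow (le_max_right t 0) (max_le (le_abs_self t) (abs_nonneg t))
          (by linarith)
      -- compose with z ↦ 1 - z and z ↦ z - 1 at z = 1
      have hin1 : HasDerivAt (fun z : ℝ => 1 - z) (-1) 1 := (hasDerivAt_id 1).const_sub 1
      have hin2 : HasDerivAt (fun z : ℝ => z - 1) 1 1 := (hasDerivAt_id 1).sub_const 1
      have hB' : HasDerivAt ((fun t : ℝ => |t| ^ (p - 1)) ∘ (fun z : ℝ => 1 - z))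
          (0 * (-1)) 1 :=
        HasDerivAt.comp_of_eq 1 hGabs hin1 (by norm_num)
      have hB : HasDerivAt (fun z : ℝ => |1 - z| ^ (p - 1)) (0 * (-1)) 1 := hB'
      have hC' : HasDerivAt ((fun t : ℝ => (max t 0) ^ (p - 1)) ∘ (fun z : ℝ => z - 1))
          (0 * 1) 1 :=
        HasDerivAt.comp_of_eq 1 hGmax hin2 (by norm_num)
      have hC : HasDerivAt (fun z : ℝ => (max (z - 1) 0) ^ (p - 1)) (0 * 1) 1 := hC'
      have h : HasDerivAt F
          (1 * (p - 1) * (1 + 1) ^ (p - 1 - 1) - 0 * (-1) + 2 * (0 * 1)) 1 :=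
        (hA.sub hB).add (hC.const_mul 2)
      convert h using 1
      simp only [hDdef]
      rw [show (1:ℝ) - 1 = 0 by norm_num, abs_zero,
        Real.zero_rpow (by linarith : p - 2 ≠ 0), show p - 1 - 1 = p - 2 by ring]
      norm_num
    · -- y > 1
      have hA : HasDerivAt (fun z : ℝ => (1 + z) ^ (p - 1))
          (1 * (p - 1) * (1 + y) ^ (p - 1 - 1)) y :=
        ((hasDerivAt_id y).const_add 1).rpow_const (Or.inl (ne_of_gt (by simp only [id_eq]; linarith)))
      have hB : HasDerivAt (fun z : ℝ => (z - 1) ^ (p - 1))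
          (1 * (p - 1) * (y - 1) ^ (p - 1 - 1)) y :=
        ((hasDerivAt_id y).sub_const 1).rpow_const (Or.inl (ne_of_gt (by simp only [id_eq]; linarith)))
      have h : HasDerivAt (fun z : ℝ => (1 + z) ^ (p - 1) + (z - 1) ^ (p - 1))
          (1 * (p - 1) * (1 + y) ^ (p - 1 - 1) + 1 * (p - 1) * (y - 1) ^ (p - 1 - 1)) y :=
        hA.add hB
      have heqF : F =ᶠ[nhds y] (fun z : ℝ => (1 + z) ^ (p - 1) + (z - 1) ^ (p - 1)) := by
        refine Filter.eventually_of_mem (Ioi_mem_nhds hgt) (fun z hz => ?_)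
        have hz1 : (1:ℝ) < z := hz
        simp only [hFdef]
        rw [abs_of_nonpos (by linarith : 1 - z ≤ 0),
          max_eq_left (by linarith : (0:ℝ) ≤ z - 1), show -(1 - z) = z - 1 by ring]
        ring
      have := h.congr_of_eventuallyEq heqF
      convert this using 1
      show (p - 1) * ((1 + y) ^ (p - 2) + |y - 1| ^ (p - 2)) = _
      rw [abs_of_nonneg (by linarith : (0:ℝ) ≤ y - 1), show p - 1 - 1 = p - 2 by ring]
      ring
      all_goals rfl
  -- F is continuous
  have hFc : Continuous F := by
    have h1 : Continuous (fun y : ℝ => (1 + y) ^ (p - 1)) :=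
      (continuous_const.add continuous_id).rpow_const (fun x => Or.inr (by linarith))
    have h2 : Continuous (fun y : ℝ => |1 - y| ^ (p - 1)) :=
      (continuous_const.sub continuous_id).abs.rpow_const (fun x => Or.inr (by linarith))
    have h3 : Continuous (fun y : ℝ => (max (y - 1) 0) ^ (p - 1)) :=
      ((continuous_id.sub continuous_const).max continuous_const).rpow_const
        (fun x => Or.inr (by linarith))
    exact (h1.sub h2).add (continuous_const.mul h3)
  -- F is convex on Ici 0
  have hF : ConvexOn ℝ (Ici 0) F := by
    refine MonotoneOn.convexOn_of_deriv (convex_Ici 0) hFc.continuousOn ?_ ?_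
    · rw [interior_Ici]
      exact fun y hy => ((hFd y hy).differentiableAt).differentiableWithinAt
    · rw [interior_Ici]
      intro x hx y hy hxy
      rw [(hFd x hx).deriv, (hFd y hy).deriv]
      simp only [hDdef]
      have := aux_mono hr1 (le_of_lt hx : (0:ℝ) ≤ x) (le_of_lt hy : (0:ℝ) ≤ y) hxy
      exact mul_le_mul_of_nonneg_left this (by linarith)
  -- f = F on Ioi 0
  have hEq : ∀ y ∈ Ioi (0:ℝ), f y = F y := by
    intro y hy
    simp only [mem_Ioi] at hy
    rw [hf y]
    simp only [hFdef]
    rw [abs_of_nonneg (by linarith : (0:ℝ) ≤ 1 + y)]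
    rcases lt_trichotomy y 1 with hlt | heq | hgt
    · rw [Real.sign_of_neg (by linarith : y - 1 < 0),
        abs_of_nonpos (by linarith : y - 1 ≤ 0),
        abs_of_nonneg (by linarith : (0:ℝ) ≤ 1 - y),
        max_eq_right (by linarith : y - 1 ≤ 0), Real.zero_rpow hq0,
        show -(y - 1) = 1 - y by ring]
      ring
    · subst heq
      rw [show (1:ℝ) - 1 = 0 by norm_num, Real.sign_zero, abs_zero,
        max_self, Real.zero_rpow hq0]
      norm_num
    · rw [Real.sign_of_pos (by linarith : 0 < y - 1),
        abs_of_nonneg (by linarith : (0:ℝ) ≤ y - 1),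
        abs_of_nonpos (by linarith : 1 - y ≤ 0),
        max_eq_left (by linarith : (0:ℝ) ≤ y - 1), show -(1 - y) = y - 1 by ring]
      ring
  have hFsub : ConvexOn ℝ (Ioi 0) F := hF.subset Ioi_subset_Ici_self (convex_Ioi 0)
  constructor
  · refine ⟨convex_Ioi 0, fun x hx y hy a b ha hb hab => ?_⟩
    have hmem : a • x + b • y ∈ Ioi (0:ℝ) := (convex_Ioi 0) hx hy ha hb hab
    rw [hEq _ hmem, hEq _ hx, hEq _ hy]
    exact hFsub.2 hx hy ha hb hab
  · intro x hx y hy hxy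
    simp only
    have hF0 : F 0 = 0 := by
      simp only [hFdef]
      rw [show (1:ℝ) + 0 = 1 by norm_num, show (1:ℝ) - 0 = 1 by norm_num,
        abs_one, Real.one_rpow, max_eq_right (by norm_num : (0:ℝ) - 1 ≤ 0),
        Real.zero_rpow hq0]
      ring
    have hx0 := (mem_Ioi.mp hx)
    have hy0 := (mem_Ioi.mp hy)
    have hs := hF.secant_mono (self_mem_Ici) (Ioi_subset_Ici_self hx)
      (Ioi_subset_Ici_self hy) hx0.ne' hy0.ne' hxy
    rw [hEq x hx, hEq y hy]
    simpa [hF0] using hs
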